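/- arXiv:2304.14054 — 3 statements merged into one kernel-verified Lean document; each statement's English description precedes it below -/
import Mathlib

section
/- With the acoustic solver pressures, the CCH entropy production in a cell is nonnegative: T dS/dt = (P*_r − P)(u*_{j+1} − u) + (P*_l − P)(u − u*_j) = ρc[(u*_{j+1} − u)² + (u − u*_j)²] ≥ 0, where P*_r = P + ρc(u*_{j+1} − u) and P*_l = P − ρc(u*_j − u). -/
/-- CCH entropy production with acoustic (first-order) sub-cell pressures:
(P*_r − P)(u*_{j+1} − u) + (P*_l − P)(u − u*_j) = ρc[(u*_{j+1}−u)² + (u−u*_j)²] ≥ 0. -/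
theorem cch_entropy_first_order (ρ c u P ustarL ustarR : ℝ)
    (hρ : 0 < ρ) (hc : 0 < c) :
    ((P + ρ * c * (ustarR - u)) - P) * (ustarR - u) +
        ((P - ρ * c * (ustarL - u)) - P) * (u - ustarL) =
      ρ * c * ((ustarR - u) ^ 2 + (u - ustarL) ^ 2) ∧
    0 ≤ ρ * c * ((ustarR - u) ^ 2 + (u - ustarL) ^ 2) := by
  constructor
  · ring
  · positivity
end

section
/- With second-order sub-cell pressures, the CCH entropy production equals ρc[(u*_{j+1} − u)² + (u − u*_j)²] + ((γ+1)/2)ρ[(u*_{j+1} − u)³ + (u − u*_j)³], and this quantity is nonnegative provided the admissibility conditions ρc(u*_{j+1} − u)² ≥ ((γ+1)/2)ρ|u*_{j+1} − u|³ and ρc(u − u*_j)² ≥ ((γ+1)/2)ρ|u − u*_j|³ hold. -/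
/-- CCH entropy production with second-order sub-cell pressures equals
ρc[a² + b²] + ((γ+1)/2)ρ[a³ + b³] with a = u*_{j+1}−u, b = u−u*_j, and is nonnegative
under the admissibility conditions. -/
theorem cch_entropy_second_order (ρ c u P γ ustarL ustarR : ℝ)
    (hρ : 0 < ρ) (hc : 0 < c) (hγ : 1 ≤ γ)
    (hadmR : (γ + 1) / 2 * ρ * |ustarR - u| ^ 3 ≤ ρ * c * (ustarR - u) ^ 2)
    (hadmL : (γ + 1) / 2 * ρ * |u - ustarL| ^ 3 ≤ ρ * c * (u - ustarL) ^ 2) :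
    ((P + ρ * c * (ustarR - u) + (γ + 1) / 2 * ρ * (ustarR - u) ^ 2) - P) * (ustarR - u) +
        ((P - ρ * c * (ustarL - u) + (γ + 1) / 2 * ρ * (ustarL - u) ^ 2) - P) *
          (u - ustarL) =
      ρ * c * ((ustarR - u) ^ 2 + (u - ustarL) ^ 2) +
        (γ + 1) / 2 * ρ * ((ustarR - u) ^ 3 + (u - ustarL) ^ 3) ∧
    0 ≤ ρ * c * ((ustarR - u) ^ 2 + (u - ustarL) ^ 2) +
        (γ + 1) / 2 * ρ * ((ustarR - u) ^ 3 + (u - ustarL) ^ 3) := by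
  constructor
  · ring
  · set a := ustarR - u
    set b := u - ustarL
    have hk : 0 ≤ (γ + 1) / 2 * ρ := by positivity
    have ha3 : -a ^ 3 ≤ |a| ^ 3 := by rw [← abs_pow]; exact neg_le_abs _
    have hb3 : -b ^ 3 ≤ |b| ^ 3 := by rw [← abs_pow]; exact neg_le_abs _
    have ha := mul_le_mul_of_nonneg_left ha3 hk
    have hb := mul_le_mul_of_nonneg_left hb3 hk
    nlinarith [hadmR, hadmL]
end

section
/- Conservation of total energy for the SGH predictor step: define u^{n+1}_j = u^n_j − (Δt/m_j)(P*_{j+1/2} − P*_{j−1/2}) (zero pressure at or beyond the boundary handled by boundary terms) and ε^{n+1}_{j+1/2} = ε^n_{j+1/2} − (Δt/m_{j+1/2}) P*_{j+1/2}(u*_{j+1} − u*_j), where u*_j = (u^n_j + u^{n+1}_j)/2. Then the total energy Σ_j m_{j+1/2} ε_{j+1/2} + Σ_j (1/2) m_j u_j² changes between steps n and n+1 only by the boundary flux Δt(P*_{N+1/2} u*_{N+1} − P*_{1/2} u*_1) (interpreting P*_{1/2}, P*_{N+3/2} as boundary pressures). -/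
lemma sgh_telescope (N : ℕ) (P v : ℕ → ℝ) :
    (∑ i ∈ Finset.Icc 1 N, P i * (v i - v (i - 1))) +
      ∑ j ∈ Finset.range (N + 1), v j * (P (j + 1) - P j) =
      P (N + 1) * v N - P 0 * v 0 := by
  induction N with
  | zero => simp; ring
  | succ n ih =>
    rw [Finset.sum_Icc_succ_top (by omega : 1 ≤ n + 1), Finset.sum_range_succ]
    have h : n + 1 - 1 = n := rfl
    rw [h]
    linear_combination ih

/-- Conservation of total energy for the SGH predictor step. Nodes j = 0,…,N carry
masses m_j and velocities; cells i = 1,…,N (between nodes i−1 and i) carry masses and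
internal energies; P 0 and P (N+1) are the boundary pressures. The total energy changes
only by the boundary flux Δt(P_{N+1} u*_N − P_0 u*_0), where u*_j = (u_j + u'_j)/2. -/
theorem sgh_energy_conservation (N : ℕ) (mnode mcell u u' ε ε' P : ℕ → ℝ) (Δt : ℝ)
    (hmn : ∀ j, 0 < mnode j) (hmc : ∀ i, 0 < mcell i) (hΔt : 0 < Δt)
    (hmom : ∀ j ∈ Finset.range (N + 1),
      u' j = u j - Δt / mnode j * (P (j + 1) - P j))
    (heps : ∀ i ∈ Finset.Icc 1 N,
      ε' i = ε i - Δt / mcell i * P i *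
        ((u i + u' i) / 2 - (u (i - 1) + u' (i - 1)) / 2)) :
    (∑ i ∈ Finset.Icc 1 N, mcell i * ε' i) +
        ∑ j ∈ Finset.range (N + 1), (1 / 2) * mnode j * (u' j) ^ 2 =
      (∑ i ∈ Finset.Icc 1 N, mcell i * ε i) +
          ∑ j ∈ Finset.range (N + 1), (1 / 2) * mnode j * (u j) ^ 2 -
        Δt * (P (N + 1) * ((u N + u' N) / 2) - P 0 * ((u 0 + u' 0) / 2)) := by
  have h1 : ∀ i ∈ Finset.Icc 1 N, mcell i * ε' i =
      mcell i * ε i - Δt * (P i * ((u i + u' i) / 2 - (u (i - 1) + u' (i - 1)) / 2)) := by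
    intro i hi
    have hm := (hmc i).ne'
    rw [heps i hi]
    field_simp
  have h2 : ∀ j ∈ Finset.range (N + 1), (1 / 2) * mnode j * (u' j) ^ 2 =
      (1 / 2) * mnode j * (u j) ^ 2 - Δt * (((u j + u' j) / 2) * (P (j + 1) - P j)) := by
    intro j hj
    have hm := (hmn j).ne'
    rw [hmom j hj]
    field_simp
    ring
  rw [Finset.sum_congr rfl h1, Finset.sum_congr rfl h2, Finset.sum_sub_distrib,
    Finset.sum_sub_distrib, ← Finset.mul_sum, ← Finset.mul_sum]
  have tel := sgh_telescope N P (fun j => (u j + u' j) / 2)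
  linear_combination (-Δt) * tel
end
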